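/- If 𝒮 is a finite subgroup of the orthogonal group O(n) and ι a unit vector such that ι'Sι ≤ 0 for all S ∈ 𝒮 \ {I} (a 'non-positive subgroup'), then |𝒮| ≤ 2n. -/

import Mathlib

open Matrix Module Finset

local notation "⟪" x ", " y "⟫" => @inner ℝ _ _ x y

/-- A finite set of nonzero vectors with pairwise nonpositive inner products in a
`d`-dimensional real inner product space has at most `2 * d` elements. -/
lemma aux_card_le (d : ℕ) :
    ∀ (E : Type) [NormedAddCommGroup E] [InnerProductSpace ℝ E] [FiniteDimensional ℝ E],
      finrank ℝ E = d → ∀ A : Finset E, (∀ v ∈ A, v ≠ 0) →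
      (∀ u ∈ A, ∀ w ∈ A, u ≠ w → ⟪u, w⟫ ≤ 0) → A.card ≤ 2 * d := by
  induction d with
  | zero =>
    intro E _ _ _ hr A h0 _
    have : A = ∅ := by
      haveI : Subsingleton E := by
        rw [← finrank_zero_iff (R := ℝ)]; omega
      by_contra h
      obtain ⟨v, hv⟩ := Finset.nonempty_of_ne_empty h
      exact h0 v hv (Subsingleton.elim v 0)
    simp [this]
  | succ d ih =>
    intro E _ _ _ hr A h0 hpair
    rcases A.eq_empty_or_nonempty with rfl | ⟨v, hvA⟩
    · simp
    have hv0 : v ≠ 0 := h0 v hvA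
    have hvnorm : (0:ℝ) < ‖v‖ ^ 2 := pow_pos (norm_pos_iff.mpr hv0) 2
    haveI : Fact (finrank ℝ E = d + 1) := ⟨hr⟩
    set K : Submodule ℝ E := (ℝ ∙ v)ᗮ with hKdef
    have hKrank : finrank ℝ K = d := Submodule.finrank_orthogonal_span_singleton hv0
    set c : E → ℝ := fun u => ⟪v, u⟫ / (‖v‖ ^ 2) with hc
    set p : E → K := fun u => K.orthogonalProjectionOnto u with hp
    have hdecomp : ∀ u : E, u = (p u : E) + c u • v := by
      intro u
      have h1 : (Kᗮ.starProjection u) = u - (p u : E) :=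
        Submodule.starProjection_orthogonal_val u
      have h2 : Kᗮ = (ℝ ∙ v) := Submodule.orthogonal_orthogonal _
      have h3 : (Kᗮ.starProjection u) = c u • v := by
        have key : ∀ (U W : Submodule ℝ E) [U.HasOrthogonalProjection]
            [W.HasOrthogonalProjection], U = W → U.starProjection u = W.starProjection u := by
          rintro U W _ _ rfl; rfl
        rw [key _ _ h2, Submodule.starProjection_singleton]
        simp [hc]
      rw [h3] at h1
      exact sub_eq_iff_eq_add'.mp h1.symm
    have horth : ∀ x : K, ⟪v, (x : E)⟫ = 0 := by
      intro x
      exact Submodule.mem_orthogonal_singleton_iff_inner_right.mp x.2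
    have horth' : ∀ x : K, ⟪(x : E), v⟫ = 0 := fun x => by
      rw [real_inner_comm]; exact horth x
    have hinner : ∀ u w : E, ⟪u, w⟫ = ⟪(p u : E), (p w : E)⟫ + c u * c w * ‖v‖ ^ 2 := by
      intro u w
      calc ⟪u, w⟫ = ⟪(p u : E) + c u • v, (p w : E) + c w • v⟫ := by
            rw [← hdecomp u, ← hdecomp w]
        _ = ⟪(p u : E), (p w : E)⟫ + c u * c w * ‖v‖ ^ 2 := by
            simp [inner_add_left, inner_add_right, real_inner_smul_left,
              real_inner_smul_right, horth, horth', real_inner_self_eq_norm_sq]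
            ring
    have hcneg : ∀ u ∈ A, u ≠ v → c u ≤ 0 := by
      intro u hu hne
      have : ⟪v, u⟫ ≤ 0 := hpair v hvA u hu (fun h => hne h.symm)
      exact div_nonpos_of_nonpos_of_nonneg this (le_of_lt hvnorm)
    -- split A
    classical
    set Z : Finset E := A.filter (fun u => p u = 0) with hZ
    set B : Finset E := A.filter (fun u => p u ≠ 0) with hB
    have hsplit : Z.card + B.card = A.card := Finset.card_filter_add_card_filter_not _
    -- zero part has at most 2 elements
    have hZcard : Z.card ≤ 2 := by
      have hsub : Z ⊆ insert v (Z.erase v) := by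
        intro a ha
        by_cases hav : a = v
        · simp [hav]
        · exact Finset.mem_insert_of_mem (Finset.mem_erase.mpr ⟨hav, ha⟩)
      have h1 : (Z.erase v).card ≤ 1 := by
        rw [Finset.card_le_one]
        intro a ha b hb
        by_contra hab
        have haZ := Finset.mem_of_mem_erase ha
        have hbZ := Finset.mem_of_mem_erase hb
        have hav : a ≠ v := (Finset.mem_erase.mp ha).1
        have hbv : b ≠ v := (Finset.mem_erase.mp hb).1
        have haA : a ∈ A := Finset.mem_of_mem_filter a haZ
        have hbA : b ∈ A := Finset.mem_of_mem_filter b hbZ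
        have hpa : p a = 0 := (Finset.mem_filter.mp haZ).2
        have hpb : p b = 0 := (Finset.mem_filter.mp hbZ).2
        have hca : c a < 0 := by
          rcases lt_or_eq_of_le (hcneg a haA hav) with h | h
          · exact h
          · exfalso
            apply h0 a haA
            have := hdecomp a
            rw [hpa, h] at this
            simpa using this
        have hcb : c b < 0 := by
          rcases lt_or_eq_of_le (hcneg b hbA hbv) with h | h
          · exact h
          · exfalso
            apply h0 b hbA
            have := hdecomp b
            rw [hpb, h] at this
            simpa using this
        have hpos : 0 < ⟪a, b⟫ := by
          rw [hinner a b, hpa]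
          simp only [Submodule.coe_zero, inner_zero_left, zero_add]
          exact mul_pos (mul_pos_of_neg_of_neg hca hcb) hvnorm
        exact absurd (hpair a haA b hbA hab) (not_le.mpr hpos)
      calc Z.card ≤ (insert v (Z.erase v)).card := Finset.card_le_card hsub
        _ ≤ (Z.erase v).card + 1 := Finset.card_insert_le _ _
        _ ≤ 2 := by omega
    -- projection injective on B
    have hccnonneg : ∀ u ∈ B, ∀ w ∈ B, 0 ≤ c u * c w := by
      intro u hu w hw
      have hpv : p v = 0 := by
        rw [hp]
        simp only
        rw [Submodule.orthogonalProjectionOnto_eq_zero_iff]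
        exact Submodule.le_orthogonal_orthogonal _ (Submodule.mem_span_singleton_self v)
      have huv : u ≠ v := fun h => (Finset.mem_filter.mp hu).2 (h ▸ hpv)
      have hwv : w ≠ v := fun h => (Finset.mem_filter.mp hw).2 (h ▸ hpv)
      exact mul_nonneg_iff.mpr (Or.inr ⟨hcneg u (Finset.mem_of_mem_filter u hu) huv,
        hcneg w (Finset.mem_of_mem_filter w hw) hwv⟩)
    have hinj : Set.InjOn p B := by
      intro u hu w hw hpw
      by_contra hne
      have huA : u ∈ A := Finset.mem_of_mem_filter u hu
      have hwA : w ∈ A := Finset.mem_of_mem_filter w hw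
      have hpu0 : p u ≠ 0 := (Finset.mem_filter.mp hu).2
      have hpos : 0 < ⟪u, w⟫ := by
        rw [hinner u w, hpw]
        have h1 : 0 < ⟪(p w : E), (p w : E)⟫ := by
          rw [real_inner_self_eq_norm_sq]
          have : (p w : E) ≠ 0 := by
            simp only [ne_eq, Submodule.coe_eq_zero]
            rw [← hpw]; exact hpu0
          exact pow_pos (norm_pos_iff.mpr this) 2
        have h2 : 0 ≤ c u * c w * ‖v‖ ^ 2 :=
          mul_nonneg (hccnonneg u hu w hw) (le_of_lt hvnorm)
        linarith
      exact absurd (hpair u huA w hwA hne) (not_le.mpr hpos)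
    have hBcard : B.card ≤ 2 * d := by
      have himg : (B.image p).card = B.card := Finset.card_image_of_injOn hinj
      rw [← himg]
      apply ih K hKrank
      · intro x hx
        obtain ⟨u, hu, rfl⟩ := Finset.mem_image.mp hx
        exact (Finset.mem_filter.mp hu).2
      · intro x hx y hy hxy
        obtain ⟨u, hu, rfl⟩ := Finset.mem_image.mp hx
        obtain ⟨w, hw, rfl⟩ := Finset.mem_image.mp hy
        have huw : u ≠ w := fun h => hxy (h ▸ rfl)
        have : ⟪(p u : E), (p w : E)⟫ ≤ 0 := by
          have h1 := hinner u w
          have h2 : ⟪u, w⟫ ≤ 0 :=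
            hpair u (Finset.mem_of_mem_filter u hu) w (Finset.mem_of_mem_filter w hw) huw
          have h3 : 0 ≤ c u * c w * ‖v‖ ^ 2 :=
            mul_nonneg (hccnonneg u hu w hw) (le_of_lt hvnorm)
          linarith
        exact this
    omega

/-- A 'non-positive' finite subgroup `𝒮` of the orthogonal group, i.e. one with
`ι'Sι ≤ 0` for all non-identity `S ∈ 𝒮` and `ι` a unit vector, has at most `2n` elements. -/
theorem nonpositive_subgroup_card_le
    {n : ℕ}
    (𝒮 : Subgroup (Matrix.orthogonalGroup (Fin n) ℝ)) [Finite 𝒮]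
    (ι : Fin n → ℝ) (hι : ι ⬝ᵥ ι = 1)
    (hnonpos : ∀ S ∈ 𝒮, S ≠ 1 → ι ⬝ᵥ (S : Matrix (Fin n) (Fin n) ℝ).mulVec ι ≤ 0) :
    Nat.card 𝒮 ≤ 2 * n := by
  classical
  haveI := Fintype.ofFinite 𝒮
  set φ : 𝒮 → EuclideanSpace ℝ (Fin n) :=
    fun S => WithLp.toLp 2 (((S : Matrix.orthogonalGroup (Fin n) ℝ) : Matrix (Fin n) (Fin n) ℝ).mulVec ι) with hφ
  -- key dot product identity
  have hkey : ∀ S T : 𝒮,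
      (φ S) ⬝ᵥ (φ T) = ι ⬝ᵥ ((((S⁻¹ * T : 𝒮) : Matrix.orthogonalGroup (Fin n) ℝ) :
        Matrix (Fin n) (Fin n) ℝ).mulVec ι) := by
    intro S T
    have h1 : (((S⁻¹ * T : 𝒮) : Matrix.orthogonalGroup (Fin n) ℝ) :
        Matrix (Fin n) (Fin n) ℝ) =
        ((S : Matrix.orthogonalGroup (Fin n) ℝ) : Matrix (Fin n) (Fin n) ℝ)ᵀ *
        ((T : Matrix.orthogonalGroup (Fin n) ℝ) : Matrix (Fin n) (Fin n) ℝ) := by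
      push_cast
      rw [Matrix.UnitaryGroup.inv_val, Matrix.star_eq_conjTranspose]
      congr 1
    conv_rhs => rw [h1, ← Matrix.mulVec_mulVec, Matrix.dotProduct_mulVec,
      Matrix.vecMul_transpose]
  have hnorm : ∀ S : 𝒮, (φ S) ⬝ᵥ (φ S) = 1 := by
    intro S
    rw [hkey S S]
    simp [hι]
  have hφne : ∀ S : 𝒮, φ S ≠ 0 := by
    intro S h
    have := hnorm S
    rw [h] at this
    simp at this
  have hpairdot : ∀ S T : 𝒮, S ≠ T → (φ S) ⬝ᵥ (φ T) ≤ 0 := by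
    intro S T hST
    rw [hkey S T]
    apply hnonpos _ (mul_mem (inv_mem (SetLike.coe_mem S)) (SetLike.coe_mem T))
    intro h
    apply hST
    have : ((S : Matrix.orthogonalGroup (Fin n) ℝ))⁻¹ * T = 1 := by
      exact_mod_cast congrArg (Subtype.val) h
    ext1
    exact (inv_mul_eq_one.mp this)
  have hinj : Function.Injective φ := by
    intro S T h
    by_contra hST
    have h1 := hpairdot S T hST
    rw [← h] at h1
    rw [hnorm S] at h1
    linarith
  -- dot product equals inner product on EuclideanSpace
  have hdot_inner : ∀ x y : EuclideanSpace ℝ (Fin n),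
      ⟪x, y⟫ = (WithLp.equiv 2 (Fin n → ℝ) x) ⬝ᵥ (WithLp.equiv 2 (Fin n → ℝ) y) := by
    intro x y
    rw [EuclideanSpace.inner_eq_star_dotProduct]
    simp [dotProduct_comm]
  set A : Finset (EuclideanSpace ℝ (Fin n)) := Finset.univ.image φ with hA
  have hcard : Nat.card 𝒮 = A.card := by
    rw [Nat.card_eq_fintype_card, hA, Finset.card_image_of_injective _ hinj, Finset.card_univ]
  rw [hcard]
  apply aux_card_le n (EuclideanSpace ℝ (Fin n)) finrank_euclideanSpace_fin
  · intro x hx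
    obtain ⟨S, _, rfl⟩ := Finset.mem_image.mp hx
    exact hφne S
  · intro x hx y hy hxy
    obtain ⟨S, _, rfl⟩ := Finset.mem_image.mp hx
    obtain ⟨T, _, rfl⟩ := Finset.mem_image.mp hy
    have hST : S ≠ T := fun h => hxy (h ▸ rfl)
    rw [hdot_inner]
    exact hpairdot S T hST
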